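/- Let \(P\) satisfy the Doeblin condition with constant \(\alpha \in (0,1)\), and let \(\hat P_1, \dots, \hat P_M\) be Markov kernels each satisfying \(\sup_\theta \|\hat P_t(\theta,\cdot) - P(\theta,\cdot)\|_{TV} \le \epsilon\). Let \(\mu\) be an invariant probability measure of \(P\) and \(\nu\) any probability measure. Then \(\|\nu \hat P_1 \cdots \hat P_M - \mu\|_{TV} \le (1-\alpha)^M \|\mu - \nu\|_{TV} + \epsilon \frac{1 - (1-\alpha)^M}{\alpha}\). -/

import Mathlib

open MeasureTheory

noncomputable def tvDist {Θ : Type*} [MeasurableSpace Θ] (μ ν : Measure Θ) : ℝ :=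
  sSup {r : ℝ | ∃ A : Set Θ, MeasurableSet A ∧ r = |(μ A).toReal - (ν A).toReal|}

/-- `iterBind ν Ps M` is the distribution `ν P̂₁ ⋯ P̂_M` obtained by applying the
kernels `Ps 1, …, Ps M` successively starting from `ν`. -/
noncomputable def iterBind {Θ : Type*} [MeasurableSpace Θ]
    (ν : Measure Θ) (Ps : ℕ → Θ → Measure Θ) : ℕ → Measure Θ
  | 0 => ν
  | n + 1 => (iterBind ν Ps n).bind (Ps (n + 1))

section Aux

variable {Θ : Type*} [MeasurableSpace Θ]

lemma toReal_prob_le_one (μ : Measure Θ) [IsProbabilityMeasure μ] (A : Set Θ) :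
    (μ A).toReal ≤ 1 := by
  have h : μ A ≤ 1 := prob_le_one
  simpa using ENNReal.toReal_mono ENNReal.one_ne_top h

lemma tvSet_nonempty (μ ν : Measure Θ) :
    {r : ℝ | ∃ A : Set Θ, MeasurableSet A ∧ r = |(μ A).toReal - (ν A).toReal|}.Nonempty :=
  ⟨_, ∅, MeasurableSet.empty, rfl⟩

lemma tvSet_bddAbove (μ ν : Measure Θ) [IsProbabilityMeasure μ] [IsProbabilityMeasure ν] :
    BddAbove {r : ℝ | ∃ A : Set Θ, MeasurableSet A ∧ r = |(μ A).toReal - (ν A).toReal|} := by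
  refine ⟨1, ?_⟩
  rintro r ⟨A, hA, rfl⟩
  have h1 := toReal_prob_le_one μ A
  have h2 := toReal_prob_le_one ν A
  have h3 : (0:ℝ) ≤ (μ A).toReal := ENNReal.toReal_nonneg
  have h4 : (0:ℝ) ≤ (ν A).toReal := ENNReal.toReal_nonneg
  rw [abs_sub_le_iff]
  constructor <;> linarith

lemma abs_le_tvDist (μ ν : Measure Θ) [IsProbabilityMeasure μ] [IsProbabilityMeasure ν]
    {A : Set Θ} (hA : MeasurableSet A) :
    |(μ A).toReal - (ν A).toReal| ≤ tvDist μ ν :=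
  le_csSup (tvSet_bddAbove μ ν) ⟨A, hA, rfl⟩

lemma tvDist_le {μ ν : Measure Θ} {c : ℝ}
    (h : ∀ A : Set Θ, MeasurableSet A → |(μ A).toReal - (ν A).toReal| ≤ c) :
    tvDist μ ν ≤ c :=
  csSup_le (tvSet_nonempty μ ν) (by rintro r ⟨A, hA, rfl⟩; exact h A hA)

lemma tvDist_nonneg (μ ν : Measure Θ) [IsProbabilityMeasure μ] [IsProbabilityMeasure ν] :
    0 ≤ tvDist μ ν :=
  (abs_nonneg _).trans (abs_le_tvDist μ ν MeasurableSet.empty)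

lemma tvDist_symm (μ ν : Measure Θ) : tvDist μ ν = tvDist ν μ := by
  unfold tvDist
  congr 1
  ext r
  constructor <;> rintro ⟨A, hA, rfl⟩
  · exact ⟨A, hA, abs_sub_comm _ _⟩
  · exact ⟨A, hA, abs_sub_comm _ _⟩

lemma tvDist_triangle (μ ν ρ : Measure Θ) [IsProbabilityMeasure μ] [IsProbabilityMeasure ν]
    [IsProbabilityMeasure ρ] : tvDist μ ρ ≤ tvDist μ ν + tvDist ν ρ := by
  apply tvDist_le
  intro A hA
  calc |(μ A).toReal - (ρ A).toReal|
      ≤ |(μ A).toReal - (ν A).toReal| + |(ν A).toReal - (ρ A).toReal| := abs_sub_le _ _ _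
    _ ≤ tvDist μ ν + tvDist ν ρ := add_le_add (abs_le_tvDist μ ν hA) (abs_le_tvDist ν ρ hA)

lemma isProb_bind (ρ : Measure Θ) [IsProbabilityMeasure ρ] (Q : Θ → Measure Θ)
    (hQ : Measurable Q) (h : ∀ θ, IsProbabilityMeasure (Q θ)) :
    IsProbabilityMeasure (ρ.bind Q) := by
  constructor
  rw [Measure.bind_apply MeasurableSet.univ hQ.aemeasurable]
  rw [lintegral_congr (fun θ => (h θ).measure_univ)]
  simp

lemma bind_apply_toReal (ρ : Measure Θ) (Q : Θ → Measure Θ)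
    (hQ : Measurable Q) (h : ∀ θ, IsProbabilityMeasure (Q θ)) {A : Set Θ}
    (hA : MeasurableSet A) :
    ((ρ.bind Q) A).toReal = ∫ θ, ((Q θ) A).toReal ∂ρ := by
  rw [Measure.bind_apply hA hQ.aemeasurable, ← integral_toReal]
  · exact ((Measure.measurable_coe hA).comp hQ).aemeasurable
  · exact ae_of_all _ fun θ => by
      haveI := h θ
      exact measure_lt_top _ _

lemma meas_eval {Q : Θ → Measure Θ} (hQ : Measurable Q) {A : Set Θ} (hA : MeasurableSet A) :
    Measurable fun θ => ((Q θ) A).toReal :=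
  ENNReal.measurable_toReal.comp ((Measure.measurable_coe hA).comp hQ)

lemma integrable_of_bounded' {ρ : Measure Θ} [IsFiniteMeasure ρ] {f : Θ → ℝ}
    (hf : Measurable f) {C : ℝ} (h : ∀ θ, |f θ| ≤ C) : Integrable f ρ :=
  (integrable_const C).mono' hf.aestronglyMeasurable
    (ae_of_all _ fun θ => by simpa [Real.norm_eq_abs] using h θ)

lemma integral_diff_le (μ ν : Measure Θ) [IsProbabilityMeasure μ] [IsProbabilityMeasure ν]
    {f : Θ → ℝ} (hf : Measurable f) {L : ℝ} (hL : 0 ≤ L)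
    (hfL : ∀ θ ζ, |f θ - f ζ| ≤ L) :
    |∫ θ, f θ ∂μ - ∫ θ, f θ ∂ν| ≤ L * tvDist μ ν := by
  rcases isEmpty_or_nonempty Θ with hE | hNE
  · exfalso
    have h1 : μ Set.univ = 1 := measure_univ
    rw [Set.univ_eq_empty_iff.2 hE] at h1
    simp at h1
  obtain ⟨θ₀⟩ := hNE
  obtain ⟨s, hs, hs1, hs2⟩ := hahn_decomposition (μ := μ) (ν := ν)
  set m := sInf (Set.range f) with hm
  have hbdd : BddBelow (Set.range f) := by
    refine ⟨f θ₀ - L, ?_⟩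
    rintro _ ⟨ζ, rfl⟩
    have := (abs_le.1 (hfL θ₀ ζ)).2
    linarith
  have hmle : ∀ θ, m ≤ f θ := fun θ => csInf_le hbdd ⟨θ, rfl⟩
  have hleL : ∀ θ, f θ - m ≤ L := by
    intro θ
    have hlow : f θ - L ≤ m := by
      refine le_csInf ⟨f θ₀, θ₀, rfl⟩ ?_
      rintro _ ⟨ζ, rfl⟩
      have := (abs_le.1 (hfL θ ζ)).2
      linarith
    linarith
  set g : Θ → ℝ := fun θ => f θ - m with hg
  have hgmeas : Measurable g := hf.sub measurable_const
  have hg0 : ∀ θ, 0 ≤ g θ := fun θ => sub_nonneg.2 (hmle θ)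
  have hgL : ∀ θ, g θ ≤ L := hleL
  have hint : ∀ (ρ : Measure Θ), IsFiniteMeasure ρ → Integrable g ρ := by
    intro ρ hρ
    haveI := hρ
    exact integrable_of_bounded' hgmeas (C := L) fun θ => by
      rw [abs_of_nonneg (hg0 θ)]; exact hgL θ
  -- Hahn pieces
  have hle1 : ν.restrict s ≤ μ.restrict s := by
    rw [Measure.le_iff]
    intro A hA
    rw [Measure.restrict_apply hA, Measure.restrict_apply hA]
    exact hs1 _ (hA.inter hs) Set.inter_subset_right
  have hle2 : μ.restrict sᶜ ≤ ν.restrict sᶜ := by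
    rw [Measure.le_iff]
    intro A hA
    rw [Measure.restrict_apply hA, Measure.restrict_apply hA]
    exact hs2 _ (hA.inter hs.compl) Set.inter_subset_right
  set ρ₁ := μ.restrict s - ν.restrict s with hρ₁def
  set ρ₂ := ν.restrict sᶜ - μ.restrict sᶜ with hρ₂def
  have hρ₁ : ρ₁ + ν.restrict s = μ.restrict s := Measure.sub_add_cancel_of_le hle1
  have hρ₂ : ρ₂ + μ.restrict sᶜ = ν.restrict sᶜ := Measure.sub_add_cancel_of_le hle2
  haveI : IsFiniteMeasure ρ₁ := by
    rw [hρ₁def]; infer_instance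
  haveI : IsFiniteMeasure ρ₂ := by
    rw [hρ₂def]; infer_instance
  -- masses
  have hmass1 : (ρ₁ Set.univ).toReal = (μ s).toReal - (ν s).toReal := by
    have h := congrArg (fun m : Measure Θ => m Set.univ) hρ₁
    simp only [Measure.add_apply, Measure.restrict_apply_univ] at h
    have h' : (ρ₁ Set.univ).toReal + (ν s).toReal = (μ s).toReal := by
      rw [← ENNReal.toReal_add (measure_ne_top _ _) (measure_ne_top _ _), h]
    linarith
  have hmass2 : (ρ₂ Set.univ).toReal = (ν sᶜ).toReal - (μ sᶜ).toReal := by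
    have h := congrArg (fun m : Measure Θ => m Set.univ) hρ₂
    simp only [Measure.add_apply, Measure.restrict_apply_univ] at h
    have h' : (ρ₂ Set.univ).toReal + (μ sᶜ).toReal = (ν sᶜ).toReal := by
      rw [← ENNReal.toReal_add (measure_ne_top _ _) (measure_ne_top _ _), h]
    linarith
  have hd1 : (ρ₁ Set.univ).toReal ≤ tvDist μ ν := by
    rw [hmass1]
    exact (le_abs_self _).trans (abs_le_tvDist μ ν hs)
  have hd2 : (ρ₂ Set.univ).toReal ≤ tvDist μ ν := by
    rw [hmass2]
    calc (ν sᶜ).toReal - (μ sᶜ).toReal ≤ |(μ sᶜ).toReal - (ν sᶜ).toReal| := by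
          rw [abs_sub_comm]; exact le_abs_self _
      _ ≤ tvDist μ ν := abs_le_tvDist μ ν hs.compl
  -- integral decomposition
  have key : ∫ θ, g θ ∂μ - ∫ θ, g θ ∂ν = ∫ θ, g θ ∂ρ₁ - ∫ θ, g θ ∂ρ₂ := by
    have e1 : ∫ θ, g θ ∂μ
        = (∫ θ, g θ ∂ρ₁ + ∫ θ, g θ ∂(ν.restrict s)) + ∫ θ, g θ ∂(μ.restrict sᶜ) := by
      conv_lhs => rw [← Measure.restrict_add_restrict_compl (μ := μ) hs]
      rw [integral_add_measure (hint _ inferInstance) (hint _ inferInstance), ← hρ₁,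
        integral_add_measure (hint _ inferInstance) (hint _ inferInstance)]
    have e2 : ∫ θ, g θ ∂ν
        = ∫ θ, g θ ∂(ν.restrict s) + (∫ θ, g θ ∂ρ₂ + ∫ θ, g θ ∂(μ.restrict sᶜ)) := by
      conv_lhs => rw [← Measure.restrict_add_restrict_compl (μ := ν) hs]
      rw [integral_add_measure (hint _ inferInstance) (hint _ inferInstance), ← hρ₂,
        integral_add_measure (hint _ inferInstance) (hint _ inferInstance)]
    rw [e1, e2]; ring
  have hb : ∀ (ρ : Measure Θ), IsFiniteMeasure ρ → (ρ Set.univ).toReal ≤ tvDist μ ν →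
      0 ≤ ∫ θ, g θ ∂ρ ∧ ∫ θ, g θ ∂ρ ≤ L * tvDist μ ν := by
    intro ρ hρi hρd
    haveI := hρi
    refine ⟨integral_nonneg hg0, ?_⟩
    calc ∫ θ, g θ ∂ρ ≤ ∫ _, L ∂ρ :=
          integral_mono (hint _ inferInstance) (integrable_const L) hgL
      _ = (ρ Set.univ).toReal * L := by rw [integral_const, smul_eq_mul]; rfl
      _ ≤ tvDist μ ν * L := mul_le_mul_of_nonneg_right hρd hL
      _ = L * tvDist μ ν := mul_comm _ _
  obtain ⟨h10, h1L⟩ := hb ρ₁ inferInstance hd1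
  obtain ⟨h20, h2L⟩ := hb ρ₂ inferInstance hd2
  have hfg : ∫ θ, f θ ∂μ - ∫ θ, f θ ∂ν = ∫ θ, g θ ∂μ - ∫ θ, g θ ∂ν := by
    have hrepr : ∀ (ρ : Measure Θ), IsProbabilityMeasure ρ → ∫ θ, f θ ∂ρ = ∫ θ, g θ ∂ρ + m := by
      intro ρ hρ
      haveI := hρ
      have hfun : (fun θ => f θ) = fun θ => g θ + m := by
        funext θ; simp [hg]
      rw [hfun, integral_add (hint _ inferInstance) (integrable_const m), integral_const]
      simp
    rw [hrepr μ inferInstance, hrepr ν inferInstance]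
    ring
  rw [hfg, key]
  exact abs_le.2 ⟨by linarith, by linarith⟩

lemma tv_contract {P : Θ → Measure Θ} (hPmeas : Measurable P)
    (hP : ∀ θ, IsProbabilityMeasure (P θ)) {α : ℝ} (hα : 0 ≤ 1 - α)
    (hDoeblin : ∀ θ ζ : Θ, tvDist (P θ) (P ζ) ≤ 1 - α)
    (μ ν : Measure Θ) [IsProbabilityMeasure μ] [IsProbabilityMeasure ν] :
    tvDist (μ.bind P) (ν.bind P) ≤ (1 - α) * tvDist μ ν := by
  apply tvDist_le
  intro A hA
  rw [bind_apply_toReal μ P hPmeas hP hA, bind_apply_toReal ν P hPmeas hP hA]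
  apply integral_diff_le μ ν (meas_eval hPmeas hA) hα
  intro θ ζ
  haveI := hP θ
  haveI := hP ζ
  exact (abs_le_tvDist (P θ) (P ζ) hA).trans (hDoeblin θ ζ)

lemma tv_perturb {P Q : Θ → Measure Θ} (hPm : Measurable P) (hQm : Measurable Q)
    (hP : ∀ θ, IsProbabilityMeasure (P θ)) (hQ : ∀ θ, IsProbabilityMeasure (Q θ))
    {ε : ℝ} (hclose : ∀ θ, tvDist (Q θ) (P θ) ≤ ε)
    (ρ : Measure Θ) [IsProbabilityMeasure ρ] :
    tvDist (ρ.bind Q) (ρ.bind P) ≤ ε := by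
  apply tvDist_le
  intro A hA
  have hQi : Integrable (fun θ => ((Q θ) A).toReal) ρ :=
    integrable_of_bounded' (meas_eval hQm hA) (C := 1) fun θ => by
      haveI := hQ θ
      rw [abs_of_nonneg ENNReal.toReal_nonneg]
      exact toReal_prob_le_one _ A
  have hPi : Integrable (fun θ => ((P θ) A).toReal) ρ :=
    integrable_of_bounded' (meas_eval hPm hA) (C := 1) fun θ => by
      haveI := hP θ
      rw [abs_of_nonneg ENNReal.toReal_nonneg]
      exact toReal_prob_le_one _ A
  rw [bind_apply_toReal ρ Q hQm hQ hA, bind_apply_toReal ρ P hPm hP hA,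
    ← integral_sub hQi hPi]
  calc |∫ θ, (((Q θ) A).toReal - ((P θ) A).toReal) ∂ρ|
      ≤ ∫ θ, |((Q θ) A).toReal - ((P θ) A).toReal| ∂ρ := by
        simpa [Real.norm_eq_abs] using
          norm_integral_le_integral_norm (fun θ => ((Q θ) A).toReal - ((P θ) A).toReal) (μ := ρ)
    _ ≤ ∫ _, ε ∂ρ := by
        apply integral_mono (hQi.sub hPi).abs (integrable_const ε)
        intro θ
        haveI := hQ θ
        haveI := hP θ
        exact (abs_le_tvDist (Q θ) (P θ) hA).trans (hclose θ)
    _ = ε := by simp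

end Aux

theorem stmt5 {Θ : Type*} [MeasurableSpace Θ]
    (P : Θ → Measure Θ) (hPmeas : Measurable P)
    (hP : ∀ θ, IsProbabilityMeasure (P θ))
    (α : ℝ) (hα0 : 0 < α) (hα1 : α < 1)
    (hDoeblin : ∀ θ ζ : Θ, tvDist (P θ) (P ζ) ≤ 1 - α)
    (M : ℕ) (Phat : ℕ → Θ → Measure Θ) (hPhatmeas : ∀ t, Measurable (Phat t))
    (hPhat : ∀ t θ, IsProbabilityMeasure (Phat t θ))
    (ε : ℝ) (hε : 0 ≤ ε)
    (hclose : ∀ t θ, tvDist (Phat t θ) (P θ) ≤ ε)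
    (μ ν : Measure Θ) [IsProbabilityMeasure μ] [IsProbabilityMeasure ν]
    (hinv : μ.bind P = μ) :
    tvDist (iterBind ν Phat M) μ ≤
      (1 - α) ^ M * tvDist μ ν + ε * (1 - (1 - α) ^ M) / α := by
  have hαle : (0:ℝ) ≤ 1 - α := by linarith
  have hprob : ∀ n, IsProbabilityMeasure (iterBind ν Phat n) := by
    intro n
    induction n with
    | zero => simpa [iterBind] using (inferInstance : IsProbabilityMeasure ν)
    | succ n ih =>
      haveI := ih
      show IsProbabilityMeasure ((iterBind ν Phat n).bind (Phat (n + 1)))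
      exact isProb_bind _ _ (hPhatmeas _) (hPhat _)
  have key : ∀ n, tvDist (iterBind ν Phat n) μ ≤
      (1 - α) ^ n * tvDist μ ν + ε * ∑ k ∈ Finset.range n, (1 - α) ^ k := by
    intro n
    induction n with
    | zero =>
      simp only [iterBind, pow_zero, one_mul, Finset.range_zero, Finset.sum_empty, mul_zero,
        add_zero]
      rw [tvDist_symm]
    | succ n ih =>
      haveI := hprob n
      haveI : IsProbabilityMeasure ((iterBind ν Phat n).bind (Phat (n + 1))) :=
        isProb_bind _ _ (hPhatmeas _) (hPhat _)
      haveI : IsProbabilityMeasure ((iterBind ν Phat n).bind P) :=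
        isProb_bind _ _ hPmeas hP
      have step : tvDist (iterBind ν Phat (n + 1)) μ ≤
          ε + (1 - α) * tvDist (iterBind ν Phat n) μ := by
        show tvDist ((iterBind ν Phat n).bind (Phat (n + 1))) μ ≤ _
        calc tvDist ((iterBind ν Phat n).bind (Phat (n + 1))) μ
            ≤ tvDist ((iterBind ν Phat n).bind (Phat (n + 1))) ((iterBind ν Phat n).bind P)
              + tvDist ((iterBind ν Phat n).bind P) μ := tvDist_triangle _ _ _
          _ ≤ ε + (1 - α) * tvDist (iterBind ν Phat n) μ := by
              apply add_le_add
              · exact tv_perturb hPmeas (hPhatmeas _) hP (hPhat _) (hclose _) _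
              · conv_lhs => rw [← hinv]
                exact tv_contract hPmeas hP hαle hDoeblin _ _
      have hmul : (1 - α) * tvDist (iterBind ν Phat n) μ ≤
          (1 - α) * ((1 - α) ^ n * tvDist μ ν + ε * ∑ k ∈ Finset.range n, (1 - α) ^ k) :=
        mul_le_mul_of_nonneg_left ih hαle
      have hsum : ∑ k ∈ Finset.range (n + 1), (1 - α) ^ k
          = (1 - α) ^ n + ∑ k ∈ Finset.range n, (1 - α) ^ k := geom_sum_succ'
      have hεbound : ε ≤ ε * 1 := by linarith
      calc tvDist (iterBind ν Phat (n + 1)) μ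
          ≤ ε + (1 - α) * tvDist (iterBind ν Phat n) μ := step
        _ ≤ ε + (1 - α) * ((1 - α) ^ n * tvDist μ ν + ε * ∑ k ∈ Finset.range n, (1 - α) ^ k) :=
            by linarith
        _ = (1 - α) ^ (n + 1) * tvDist μ ν + ε * ∑ k ∈ Finset.range (n + 1), (1 - α) ^ k := by
            rw [geom_sum_succ]
            ring
  have hgeom : ∑ k ∈ Finset.range M, (1 - α) ^ k = (1 - (1 - α) ^ M) / α := by
    rw [geom_sum_eq (by intro h; exact hα0.ne' (by linarith) : (1:ℝ) - α ≠ 1) M,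
      show (1:ℝ) - α - 1 = -α by ring, div_neg, ← neg_div, neg_sub]
  have := key M
  rw [hgeom] at this
  calc tvDist (iterBind ν Phat M) μ
      ≤ (1 - α) ^ M * tvDist μ ν + ε * ((1 - (1 - α) ^ M) / α) := this
    _ = (1 - α) ^ M * tvDist μ ν + ε * (1 - (1 - α) ^ M) / α := by ring
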